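/- Let a₀ ≥ 3 and k ≥ 4 be integers, with b₀ = ⌊k·a₀/2⌋, a_l = k·b_{l−1} − a₀ + 1, b_l = ⌊k·a_l/2⌋ for l ≥ 1, and A = ⋃_{l≥0} [a_l, b_l] ∩ ℕ. Then for every l ≥ 0 and every integer n with b_l + 1 ≤ n ≤ a_{l+1} − 1, there exist a, b ∈ A with a < n and b < n such that n = k·a − b. -/
import Mathlib


theorem stmt_11 (k : ℕ) (a b : ℕ → ℕ) (hk : 4 ≤ k) (ha0 : 3 ≤ a 0)
    (hb : ∀ l, b l = k * a l / 2)
    (ha : ∀ l, a (l + 1) = k * b l - a 0 + 1) :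
    ∀ l n, b l + 1 ≤ n → n ≤ a (l + 1) - 1 →
      ∃ x ∈ {m : ℕ | ∃ j, a j ≤ m ∧ m ≤ b j},
        ∃ y ∈ {m : ℕ | ∃ j, a j ≤ m ∧ m ≤ b j},
          x < n ∧ y < n ∧ n + y = k * x := by
  classical
  have hk0 : 0 < k := by omega
  have hbl1 : ∀ i, k * a i ≤ 2 * b i + 1 ∧ 2 * b i ≤ k * a i := by
    intro i
    rw [hb i]
    generalize k * a i = m
    omega
  have hba2 : ∀ i, 2 * a i ≤ b i := by
    intro i
    have h1 : 4 * a i ≤ k * a i := Nat.mul_le_mul hk le_rfl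
    have h2 := (hbl1 i).1
    have h3 := (hbl1 i).2
    generalize k * a i = m at h1 h2 h3
    omega
  have hmono3 : ∀ i, 3 ≤ a i ∧ a 0 ≤ a i := by
    intro i
    induction i with
    | zero => exact ⟨ha0, le_rfl⟩
    | succ i ih =>
      have h2 := hba2 i
      have h3 : b i ≤ k * b i := Nat.le_mul_of_pos_left _ hk0
      rw [ha i]
      generalize k * b i = m at h3 ⊢
      omega
  have hstep : ∀ i, a i ≤ a (i + 1) := by
    intro i
    have h2 := hba2 i
    have h3 : b i ≤ k * b i := Nat.le_mul_of_pos_left _ hk0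
    have h4 := (hmono3 i).1
    have h5 := (hmono3 i).2
    rw [ha i]
    generalize k * b i = m at h3 ⊢
    omega
  have hamono : ∀ i j, i ≤ j → a i ≤ a j := fun i j h =>
    monotone_nat_of_le_succ hstep h
  have hbak : ∀ i, a i + k ≤ b i + 1 := by
    intro i
    have h3 := (hmono3 i).1
    have hkey : (a i + k - 1) * 2 ≤ k * a i := by
      obtain ⟨k', rfl⟩ : ∃ k', k = k' + 4 := ⟨k - 4, by omega⟩
      obtain ⟨a', ha'⟩ : ∃ a', a i = a' + 3 := ⟨a i - 3, by omega⟩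
      rw [ha']
      have e : a' + 3 + (k' + 4) - 1 = a' + k' + 6 := by omega
      rw [e]
      nlinarith [Nat.zero_le (k' * a')]
    have hdiv := (Nat.le_div_iff_mul_le (by norm_num : 0 < 2)).2 hkey
    rw [hb i]
    generalize k * a i / 2 = m at hdiv ⊢
    omega
  have hkb : ∀ i, k * a i + a i ≤ k * b i := by
    intro i
    have h1 := (hbl1 i).1
    have h3 := (hmono3 i).1
    have e1 : k * (k * a i) ≤ k * (2 * b i + 1) := Nat.mul_le_mul le_rfl h1
    have e2 : 4 * (k * a i) ≤ k * (k * a i) := Nat.mul_le_mul hk le_rfl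
    have e3 : 4 * a i ≤ k * a i := Nat.mul_le_mul hk le_rfl
    have e4 : k * 1 ≤ k * a i := Nat.mul_le_mul le_rfl (by omega)
    have e5 : k * (2 * b i + 1) = 2 * (k * b i) + k := by ring
    rw [e5] at e1
    generalize k * (k * a i) = R at e1 e2
    generalize k * a i = P at e2 e3 e4 ⊢
    generalize k * b i = Q at e1 ⊢
    omega
  have hceil : ∀ m : ℕ, ∃ x, m ≤ k * x ∧ k * x < m + k := by
    intro m
    refine ⟨(m + k - 1) / k, ?_, ?_⟩
    · have h1 : k * ((m + k - 1) / k) + (m + k - 1) % k = m + k - 1 :=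
        Nat.div_add_mod _ _
      have h2 : (m + k - 1) % k < k := Nat.mod_lt _ hk0
      generalize k * ((m + k - 1) / k) = A at h1 ⊢
      generalize (m + k - 1) % k = r at h1 h2
      omega
    · have h1 : (m + k - 1) / k * k ≤ m + k - 1 := Nat.div_mul_le_self _ _
      rw [mul_comm] at h1
      generalize k * ((m + k - 1) / k) = A at h1 ⊢
      omega
  intro l n h1 h2
  have h3l := (hmono3 l).1
  have ha0l := (hmono3 l).2
  have hn2 : n + a 0 ≤ k * b l := by
    have e1 : b l ≤ k * b l := Nat.le_mul_of_pos_left _ hk0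
    have e2 := hba2 l
    rw [ha l] at h2
    generalize k * b l = m at e1 h2 ⊢
    omega
  by_cases hc : k * a l ≤ n + a l
  · -- Case 2 : n ≥ (k-1) * a l
    have hP : ∃ j, k * a l ≤ n + a j := ⟨l, hc⟩
    obtain ⟨j, hj, hjl, hjmin⟩ :
        ∃ j, k * a l ≤ n + a j ∧ j ≤ l ∧ ∀ i < j, ¬ (k * a l ≤ n + a i) :=
      ⟨Nat.find hP, Nat.find_spec hP, Nat.find_le hc, fun i hi => Nat.find_min hP hi⟩
    obtain ⟨x, hx1, hx2⟩ := hceil (n + a j)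
    have haj : a j ≤ a l := hamono j l hjl
    have hnaj : n + a j ≤ k * b l := by
      rcases Nat.eq_zero_or_pos j with hj0 | hj0
      · rw [hj0]; exact hn2
      · have hmin := hjmin (j - 1) (by omega)
        have h3j := (hmono3 (j - 1)).1
        have hQ := hkb l
        generalize k * a l = P at hj hmin hQ
        generalize k * b l = Q at hQ ⊢
        omega
    have hxa : a l ≤ x := by
      have e : k * a l ≤ k * x := le_trans hj hx1
      exact Nat.le_of_mul_le_mul_left e hk0
    have hxb : x ≤ b l := by
      have e : k * x < k * (b l + 1) := by
        have e2 : n + a j + k ≤ k * b l + k := Nat.add_le_add_right hnaj k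
        have e3 : k * (b l + 1) = k * b l + k := by ring
        rw [e3]
        exact lt_of_lt_of_le hx2 e2
      have := Nat.lt_of_mul_lt_mul_left e
      omega
    have hbj : b j ≤ b l := by
      rw [hb j, hb l]
      exact Nat.div_le_div_right (Nat.mul_le_mul le_rfl haj)
    have hyb : a j ≤ k * x - n ∧ k * x - n ≤ b j := by
      have e1 := hbak j
      generalize k * x = X at hx1 hx2 ⊢
      omega
    refine ⟨x, ⟨l, hxa, hxb⟩, k * x - n, ⟨j, hyb.1, hyb.2⟩, ?_, ?_, ?_⟩
    · omega
    · have e := hyb.2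
      generalize k * x = X at e ⊢
      omega
    · have e := hx1
      generalize k * x = X at e ⊢
      omega
  · -- Case 1 : n < (k-1) * a l, take x = a l
    have key : a l ≤ b l ∧ a l ≤ k * a l - n ∧ k * a l - n ≤ b l ∧
        a l < n ∧ k * a l - n < n ∧ n + (k * a l - n) = k * a l := by
      have e1 := (hbl1 l).1
      have e2 := hba2 l
      generalize k * a l = m at hc e1 ⊢
      omega
    exact ⟨a l, ⟨l, le_rfl, key.1⟩, k * a l - n, ⟨l, key.2.1, key.2.2.1⟩,
      key.2.2.2.1, key.2.2.2.2.1, key.2.2.2.2.2⟩
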